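/- arXiv:2603.14514 — 5 statements merged into one kernel-verified Lean document; each statement's English description precedes it below -/
import Mathlib

section
/- Let the stepsize be α_k = a/(k + K₀) with μ a > 1 (in particular a ≥ 2/μ) and K₀ ≥ μ a. Then for every k ∈ {0, 1, …}: Δ₀ ζ_{0,k−1} + (CL/2) Σ_{ℓ=0}^{k−1} α_ℓ² ζ_{ℓ+1,k−1} ≤ (K₀ Δ₀ + e a² C L / 2) / (k + K₀). -/
open scoped BigOperators

private lemma sgd_factor_nonneg (μ a K0 : ℝ) (hμ : 0 < μ) (ha0 : 0 < a)
    (hK0 : μ * a ≤ K0) (j : ℕ) : 0 ≤ 1 - μ * (a / ((j : ℝ) + K0)) := by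
  have hx : (0 : ℝ) < (j : ℝ) + K0 := by
    have : (0:ℝ) ≤ (j:ℝ) := Nat.cast_nonneg j
    nlinarith
  have h1 : μ * (a / ((j : ℝ) + K0)) = μ * a / ((j : ℝ) + K0) := by ring
  rw [sub_nonneg, h1, div_le_one hx]
  have : (0:ℝ) ≤ (j:ℝ) := Nat.cast_nonneg j
  linarith

private lemma sgd_prod_nonneg (μ a K0 : ℝ) (hμ : 0 < μ) (ha0 : 0 < a)
    (hK0 : μ * a ≤ K0) (s : Finset ℕ) :
    0 ≤ ∏ j ∈ s, (1 - μ * (a / ((j : ℝ) + K0))) :=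
  Finset.prod_nonneg fun j _ => sgd_factor_nonneg μ a K0 hμ ha0 hK0 j

private lemma sgd_prod_bound (μ a K0 : ℝ) (hμ : 0 < μ) (ha0 : 0 < a)
    (hμa2 : 2 ≤ μ * a) (hK0 : μ * a ≤ K0) :
    ∀ m k : ℕ, m ≤ k →
      ∏ j ∈ Finset.Ico m k, (1 - μ * (a / ((j : ℝ) + K0)))
        ≤ (((m : ℝ) + K0 - 1) / ((k : ℝ) + K0 - 1)) ^ 2 := by
  intro m k hmk
  induction k, hmk using Nat.le_induction with
  | base =>
      simp only [Finset.Ico_self, Finset.prod_empty]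
      have h : ((m : ℝ) + K0 - 1) ≠ 0 := by nlinarith [Nat.cast_nonneg (α := ℝ) m]
      rw [div_self h]; norm_num
  | succ k hmk ih =>
      rw [Finset.prod_Ico_succ_top hmk]
      have hk0 : (0:ℝ) < (k : ℝ) + K0 := by nlinarith [Nat.cast_nonneg (α := ℝ) k]
      have hk1 : (0:ℝ) < (k : ℝ) + K0 - 1 := by nlinarith [Nat.cast_nonneg (α := ℝ) k]
      have hm1 : (0:ℝ) ≤ (m : ℝ) + K0 - 1 := by nlinarith [Nat.cast_nonneg (α := ℝ) m]
      have hfac : 1 - μ * (a / ((k : ℝ) + K0))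
          ≤ (((k : ℝ) + K0 - 1) / ((k : ℝ) + K0)) ^ 2 := by
        rw [div_pow, le_div_iff₀ (by positivity)]
        have h1 : μ * (a / ((k : ℝ) + K0)) = μ * a / ((k : ℝ) + K0) := by ring
        rw [h1]
        have h2 : (1 - μ * a / ((k : ℝ) + K0)) * ((k:ℝ) + K0) ^ 2
            = ((k:ℝ) + K0) ^ 2 - μ * a * ((k:ℝ) + K0) := by
          field_simp
        rw [h2]
        nlinarith
      have hfn : 0 ≤ 1 - μ * (a / ((k : ℝ) + K0)) := sgd_factor_nonneg μ a K0 hμ ha0 hK0 k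
      calc (∏ j ∈ Finset.Ico m k, (1 - μ * (a / ((j : ℝ) + K0)))) *
              (1 - μ * (a / ((k : ℝ) + K0)))
          ≤ (((m : ℝ) + K0 - 1) / ((k : ℝ) + K0 - 1)) ^ 2 *
              ((((k : ℝ) + K0 - 1) / ((k : ℝ) + K0)) ^ 2) := by
            apply mul_le_mul ih hfac hfn (by positivity)
        _ = (((m : ℝ) + K0 - 1) / (((k : ℕ) + 1 : ℕ) + K0 - 1)) ^ 2 := by
            push_cast
            rw [← mul_pow]
            congr 1
            rw [div_mul_div_comm, mul_comm ((m:ℝ) + K0 - 1) _,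
              mul_div_mul_left _ _ hk1.ne']
            congr 1
            ring

/-- Lemma A.4 (bound on the deterministic terms): for stepsizes `α_k = a/(k+K₀)` with
`μ a > 1` (in particular `a ≥ 2/μ`) and `K₀ ≥ μ a`, for every `k ≥ 0`,
`Δ₀ ζ_{0,k-1} + (CL/2) Σ_{ℓ=0}^{k-1} α_ℓ² ζ_{ℓ+1,k-1} ≤ (K₀ Δ₀ + e a² C L / 2)/(k+K₀)`,
where `ζ_{m,n} = ∏_{j=m}^{n} (1 - μ α_j)` (equal to `1` when `n < m`). -/
theorem sgd_pl_deterministic_term_bound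
    (Δ0 C L μ a K0 : ℝ)
    (hΔ0 : 0 ≤ Δ0) (hC : 0 ≤ C) (hL : 0 < L) (hμ : 0 < μ)
    (hμa : 1 < μ * a) (ha : 2 / μ ≤ a) (hK0 : μ * a ≤ K0) :
    ∀ k : ℕ,
      Δ0 * (∏ j ∈ Finset.range k, (1 - μ * (a / (j + K0)))) +
        (C * L / 2) *
          ∑ ℓ ∈ Finset.range k,
            (a / (ℓ + K0)) ^ 2 * ∏ j ∈ Finset.Ico (ℓ + 1) k, (1 - μ * (a / (j + K0)))
      ≤ (K0 * Δ0 + Real.exp 1 * a ^ 2 * C * L / 2) / (k + K0) := by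
  have ha0 : 0 < a := by
    by_contra h
    push_neg at h
    nlinarith
  have hμa2 : 2 ≤ μ * a := by
    have := (div_le_iff₀ hμ).mp ha
    linarith [mul_comm a μ]
  have hK02 : (2:ℝ) ≤ K0 := le_trans hμa2 hK0
  intro k
  have hk0 : (0:ℝ) < (k : ℝ) + K0 := by nlinarith [Nat.cast_nonneg (α := ℝ) k]
  have hk1 : (0:ℝ) < (k : ℝ) + K0 - 1 := by nlinarith [Nat.cast_nonneg (α := ℝ) k]
  -- First term bound
  have hP : ∏ j ∈ Finset.range k, (1 - μ * (a / ((j:ℝ) + K0)))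
      ≤ (K0 - 1) / ((k : ℝ) + K0 - 1) := by
    have h0 := sgd_prod_bound μ a K0 hμ ha0 hμa2 hK0 0 k (Nat.zero_le k)
    rw [← Finset.range_eq_Ico] at h0
    simp only [Nat.cast_zero, zero_add] at h0
    have hr0 : 0 ≤ (K0 - 1) / ((k : ℝ) + K0 - 1) := div_nonneg (by linarith) hk1.le
    have hr1 : (K0 - 1) / ((k : ℝ) + K0 - 1) ≤ 1 := by
      rw [div_le_one hk1]
      linarith [Nat.cast_nonneg (α := ℝ) k]
    nlinarith
  have hT1 : Δ0 * (∏ j ∈ Finset.range k, (1 - μ * (a / ((j:ℝ) + K0))))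
      ≤ K0 * Δ0 / ((k : ℝ) + K0) := by
    have h1 : Δ0 * (∏ j ∈ Finset.range k, (1 - μ * (a / ((j:ℝ) + K0))))
        ≤ Δ0 * ((K0 - 1) / ((k : ℝ) + K0 - 1)) := by
      exact mul_le_mul_of_nonneg_left hP hΔ0
    have h2 : Δ0 * ((K0 - 1) / ((k : ℝ) + K0 - 1)) ≤ K0 * Δ0 / ((k : ℝ) + K0) := by
      rw [mul_div_assoc' , div_le_div_iff₀ hk1 hk0]
      nlinarith [Nat.cast_nonneg (α := ℝ) k]
    linarith
  -- Sum bound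
  have hS : ∑ ℓ ∈ Finset.range k,
        (a / ((ℓ:ℝ) + K0)) ^ 2 * ∏ j ∈ Finset.Ico (ℓ + 1) k, (1 - μ * (a / ((j:ℝ) + K0)))
      ≤ (k : ℝ) * (a ^ 2 / ((k : ℝ) + K0 - 1) ^ 2) := by
    calc ∑ ℓ ∈ Finset.range k,
          (a / ((ℓ:ℝ) + K0)) ^ 2 * ∏ j ∈ Finset.Ico (ℓ + 1) k, (1 - μ * (a / ((j:ℝ) + K0)))
        ≤ ∑ ℓ ∈ Finset.range k, (a ^ 2 / ((k : ℝ) + K0 - 1) ^ 2) := by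
          apply Finset.sum_le_sum
          intro ℓ hℓ
          rw [Finset.mem_range] at hℓ
          have hℓ0 : (0:ℝ) < (ℓ:ℝ) + K0 := by nlinarith [Nat.cast_nonneg (α := ℝ) ℓ]
          have hpb := sgd_prod_bound μ a K0 hμ ha0 hμa2 hK0 (ℓ+1) k hℓ
          have hcast : ((ℓ + 1 : ℕ) : ℝ) + K0 - 1 = (ℓ:ℝ) + K0 := by push_cast; ring
          rw [hcast] at hpb
          calc (a / ((ℓ:ℝ) + K0)) ^ 2 *
                ∏ j ∈ Finset.Ico (ℓ + 1) k, (1 - μ * (a / ((j:ℝ) + K0)))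
              ≤ (a / ((ℓ:ℝ) + K0)) ^ 2 * (((ℓ:ℝ) + K0) / ((k : ℝ) + K0 - 1)) ^ 2 :=
                mul_le_mul_of_nonneg_left hpb (by positivity)
            _ = a ^ 2 / ((k : ℝ) + K0 - 1) ^ 2 := by
                field_simp
      _ = (k : ℝ) * (a ^ 2 / ((k : ℝ) + K0 - 1) ^ 2) := by
          rw [Finset.sum_const, Finset.card_range, nsmul_eq_mul]
  have he : (2:ℝ) ≤ Real.exp 1 := by
    have := Real.add_one_le_exp (1:ℝ)
    linarith
  have hT2 : C * L / 2 * ((k : ℝ) * (a ^ 2 / ((k : ℝ) + K0 - 1) ^ 2))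
      ≤ (Real.exp 1 * a ^ 2 * C * L / 2) / ((k : ℝ) + K0) := by
    have hkey : (k : ℝ) * (a ^ 2 / ((k : ℝ) + K0 - 1) ^ 2)
        ≤ Real.exp 1 * a ^ 2 / ((k : ℝ) + K0) := by
      rw [mul_div_assoc', div_le_div_iff₀ (by positivity) hk0]
      have hkn : (0:ℝ) ≤ (k:ℝ) := Nat.cast_nonneg k
      have h3 : (k:ℝ) * ((k:ℝ) + K0) ≤ 2 * ((k:ℝ) + K0 - 1) ^ 2 := by nlinarith
      nlinarith [mul_le_mul_of_nonneg_left h3 (sq_nonneg a),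
        mul_nonneg (sq_nonneg a) (sq_nonneg ((k:ℝ) + K0 - 1))]
    calc C * L / 2 * ((k : ℝ) * (a ^ 2 / ((k : ℝ) + K0 - 1) ^ 2))
        ≤ C * L / 2 * (Real.exp 1 * a ^ 2 / ((k : ℝ) + K0)) := by
          apply mul_le_mul_of_nonneg_left hkey (by positivity)
      _ = (Real.exp 1 * a ^ 2 * C * L / 2) / ((k : ℝ) + K0) := by
          field_simp
  have hsum := mul_le_mul_of_nonneg_left hS (by positivity : (0:ℝ) ≤ C * L / 2)
  have hfinal : Δ0 * (∏ j ∈ Finset.range k, (1 - μ * (a / ((j:ℝ) + K0)))) +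
        C * L / 2 * ∑ ℓ ∈ Finset.range k,
            (a / ((ℓ:ℝ) + K0)) ^ 2 * ∏ j ∈ Finset.Ico (ℓ + 1) k, (1 - μ * (a / ((j:ℝ) + K0)))
      ≤ K0 * Δ0 / ((k : ℝ) + K0) + (Real.exp 1 * a ^ 2 * C * L / 2) / ((k : ℝ) + K0) := by
    linarith
  rw [add_div]
  exact hfinal
end

section
/- For every x ∈ ℝ^d and every z ∈ 𝒵, the Poisson-equation solution satisfies ‖V(x, z)‖ ≤ 2 t_mix √d · sup_{z′∈𝒵} ‖g(x, z′)‖, and consequently ‖V(x, z)‖² ≤ 4 t_mix² d ((2AL + B)(f(x) − f⋆) + C). -/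
open MeasureTheory ProbabilityTheory Filter
open scoped BigOperators ENNReal RealInnerProductSpace Topology

/-- The `k`-step transition kernel `p^{(k)}` induced by a transition kernel `p`
(`p^{(0)}` is the identity/Dirac kernel). -/
noncomputable def kstep {𝒵 : Type*} [MeasurableSpace 𝒵] (p : Kernel 𝒵 𝒵) : ℕ → Kernel 𝒵 𝒵 :=
  fun n => Nat.rec Kernel.id (fun _ κ => κ.comp p) n

instance kstep_isMarkov {𝒵 : Type*} [MeasurableSpace 𝒵] (p : Kernel 𝒵 𝒵) [IsMarkovKernel p] :
    ∀ n, IsMarkovKernel (kstep p n)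
  | 0 => inferInstanceAs (IsMarkovKernel Kernel.id)
  | n + 1 => by
      have := kstep_isMarkov p n
      exact inferInstanceAs (IsMarkovKernel ((kstep p n).comp p))

/-- The total variation norm `‖μ - ν‖_TV = |μ - ν|(𝒵)` of the difference of two finite
measures, where `|·|` denotes the total variation (Jordan decomposition) measure. -/
noncomputable def tvDist {𝒵 : Type*} [MeasurableSpace 𝒵] (μ ν : Measure 𝒵)
    [IsFiniteMeasure μ] [IsFiniteMeasure ν] : ℝ :=
  ((μ.toSignedMeasure - ν.toSignedMeasure).totalVariation Set.univ).toReal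

/-- The solution `V(x, z) = 𝔼[Σ_{ℓ≥0} (g(x, Z_ℓ) - ∇f(x)) | Z₀ = z]
= Σ_{ℓ≥0} (∫ g(x, z') p^{(ℓ)}(dz' | z) - ∇f(x))` of the Poisson equation. -/
noncomputable def poissonV {d : ℕ} {𝒵 : Type*} [MeasurableSpace 𝒵]
    (p : Kernel 𝒵 𝒵) (f : EuclideanSpace ℝ (Fin d) → ℝ)
    (g : EuclideanSpace ℝ (Fin d) → 𝒵 → EuclideanSpace ℝ (Fin d))
    (x : EuclideanSpace ℝ (Fin d)) (z : 𝒵) : EuclideanSpace ℝ (Fin d) :=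
  ∑' ℓ : ℕ, ((∫ z', g x z' ∂((kstep p ℓ) z)) - gradient f x)

section Aux

lemma integral_sub_le_tv {𝒵 : Type*} [MeasurableSpace 𝒵] [Nonempty 𝒵]
    {E : Type*} [NormedAddCommGroup E] [NormedSpace ℝ E]
    (μ ν : Measure 𝒵) [IsFiniteMeasure μ] [IsFiniteMeasure ν]
    (h : 𝒵 → E) (M : ℝ) (hM : ∀ z, ‖h z‖ ≤ M)
    (hsm : StronglyMeasurable h) :
    ‖(∫ z, h z ∂μ) - ∫ z, h z ∂ν‖ ≤ M * tvDist μ ν := by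
  rw [tvDist]
  set s := μ.toSignedMeasure - ν.toSignedMeasure with hs
  set P := s.toJordanDecomposition.posPart with hP
  set N := s.toJordanDecomposition.negPart with hN
  have hint : ∀ (ρ : Measure 𝒵) [IsFiniteMeasure ρ], Integrable h ρ := fun ρ _ =>
    (integrable_const M).mono' hsm.aestronglyMeasurable (Filter.Eventually.of_forall hM)
  have h2 : μ.toSignedMeasure - ν.toSignedMeasure = P.toSignedMeasure - N.toSignedMeasure :=
    (s.toSignedMeasure_toJordanDecomposition).symm
  rw [sub_eq_sub_iff_add_eq_add, ← Measure.toSignedMeasure_add, ← Measure.toSignedMeasure_add,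
    Measure.toSignedMeasure_eq_toSignedMeasure_iff] at h2
  have h3 : (∫ z, h z ∂μ) + ∫ z, h z ∂N = (∫ z, h z ∂ν) + ∫ z, h z ∂P := by
    rw [← integral_add_measure (hint μ) (hint N), ← integral_add_measure (hint ν) (hint P), h2,
      add_comm P ν]
  have h4 : (∫ z, h z ∂μ) - ∫ z, h z ∂ν = (∫ z, h z ∂P) - ∫ z, h z ∂N := by
    rw [sub_eq_sub_iff_add_eq_add, h3, add_comm]
  rw [h4]
  have hPu := norm_integral_le_of_norm_le_const (μ := P) (f := h)
    (Filter.Eventually.of_forall hM)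
  have hNu := norm_integral_le_of_norm_le_const (μ := N) (f := h)
    (Filter.Eventually.of_forall hM)
  have htv : (s.totalVariation Set.univ).toReal = (P Set.univ).toReal + (N Set.univ).toReal := by
    rw [SignedMeasure.totalVariation]
    simp [ENNReal.toReal_add (measure_ne_top _ _) (measure_ne_top _ _)]
    rfl
  calc ‖(∫ z, h z ∂P) - ∫ z, h z ∂N‖ ≤ ‖∫ z, h z ∂P‖ + ‖∫ z, h z ∂N‖ := norm_sub_le _ _
    _ ≤ M * (P Set.univ).toReal + M * (N Set.univ).toReal := add_le_add hPu hNu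
    _ = M * (s.totalVariation Set.univ).toReal := by rw [htv]; ring

lemma grad_sq_le {F : Type*} [NormedAddCommGroup F] [InnerProductSpace ℝ F] [CompleteSpace F]
    (f : F → ℝ) (L fstar : ℝ) (hL : 0 < L)
    (hbdd : BddBelow (Set.range f)) (hfstar : fstar = ⨅ y, f y)
    (hsmooth : ∀ y y', ‖gradient f y - gradient f y'‖ ≤ L * ‖y - y'‖)
    (x : F) : ‖gradient f x‖ ^ 2 ≤ 2 * L * (f x - fstar) := by
  have hfs : ∀ y, fstar ≤ f y := by
    intro y; rw [hfstar]; exact ciInf_le hbdd y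
  set c := gradient f x with hc
  rcases eq_or_ne c 0 with h0 | h0
  · rw [h0]; simp; nlinarith [hfs x]
  have hcn : 0 < ‖c‖ := norm_pos_iff.2 h0
  set T := ‖c‖ / L with hT
  have hT0 : 0 < T := div_pos hcn hL
  set u := ‖c‖⁻¹ • c with hu
  have hun : ‖u‖ = 1 := by
    rw [hu, norm_smul, norm_inv, norm_norm]
    field_simp
  have hdiff : ∀ y : F, ‖y - x‖ < T → DifferentiableAt ℝ f y := by
    intro y hy
    by_contra hnd
    have hgy : gradient f y = 0 := by
      rw [gradient, fderiv_zero_of_not_differentiableAt hnd, map_zero]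
    have := hsmooth x y
    rw [hgy, sub_zero, ← hc] at this
    have h1 : ‖c‖ ≤ L * ‖y - x‖ := by rwa [norm_sub_rev x y] at this
    rw [hT, lt_div_iff₀ hL] at hy
    nlinarith
  set γ : ℝ → F := fun t => x - t • u with hγ
  have hγx : ∀ t : ℝ, ‖γ t - x‖ = |t| := by
    intro t
    simp only [hγ, sub_sub_cancel_left, norm_neg, norm_smul, hun, Real.norm_eq_abs, mul_one]
  have hγd : ∀ t : ℝ, HasDerivAt γ (-u) t := by
    intro t
    simpa using ((hasDerivAt_id t).smul_const u).const_sub x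
  have hinner : ∀ y v : F, DifferentiableAt ℝ f y → (fderiv ℝ f y) v = ⟪gradient f y, v⟫ := by
    intro y v hd
    rw [gradient, InnerProductSpace.toDual_symm_apply]
  have hfd : ∀ t : ℝ, |t| < T → HasDerivAt (fun t => f (γ t)) (-⟪gradient f (γ t), u⟫) t := by
    intro t ht
    have hd : DifferentiableAt ℝ f (γ t) := hdiff _ (by rw [hγx]; exact ht)
    have := hd.hasFDerivAt.comp_hasDerivAt t (hγd t)
    rwa [map_neg, hinner _ _ hd] at this
  set ψ : ℝ → ℝ := fun t => f (γ t) + ‖c‖ * t - L * t ^ 2 / 2 with hψ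
  have hanti : AntitoneOn ψ (Set.Ico 0 T) := by
    have hconv : Convex ℝ (Set.Ico (0:ℝ) T) := convex_Ico 0 T
    have hint : interior (Set.Ico (0:ℝ) T) = Set.Ioo 0 T := interior_Ico
    have habs : ∀ t ∈ Set.Ico (0:ℝ) T, |t| < T := by
      intro t ht; rw [abs_of_nonneg ht.1]; exact ht.2
    have hd : ∀ t ∈ Set.Ico (0:ℝ) T, HasDerivAt ψ (-⟪gradient f (γ t), u⟫ + ‖c‖ - L * t) t := by
      intro t ht
      have h1 := (hfd t (habs t ht)).add ((hasDerivAt_id t).const_mul ‖c‖)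
      have h2 : HasDerivAt (fun t : ℝ => L * t ^ 2 / 2) (L * t) t := by
        have := ((hasDerivAt_pow 2 t).const_mul L).div_const 2
        simpa using this.congr_deriv (by ring)
      exact (h1.sub h2).congr_deriv (by ring)
    apply antitoneOn_of_deriv_nonpos hconv
    · intro t ht
      exact ((hd t ht).continuousAt).continuousWithinAt
    · intro t ht
      rw [hint] at ht
      exact (hd t ⟨le_of_lt ht.1, ht.2⟩).differentiableAt.differentiableWithinAt
    · intro t ht
      rw [hint] at ht
      have ht' : t ∈ Set.Ico (0:ℝ) T := ⟨le_of_lt ht.1, ht.2⟩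
      rw [(hd t ht').deriv]
      have hcu : ⟪c, u⟫ = ‖c‖ := by
        rw [hu, real_inner_smul_right, real_inner_self_eq_norm_sq]
        field_simp
      have h5 : ‖gradient f (γ t) - c‖ ≤ L * t := by
        have := hsmooth (γ t) x
        rwa [← hc, hγx t, abs_of_nonneg ht'.1] at this
      have h6 : -(L * t) ≤ ⟪gradient f (γ t) - c, u⟫ := by
        have hb := abs_real_inner_le_norm (gradient f (γ t) - c) u
        rw [hun, mul_one] at hb
        exact (abs_le.1 (hb.trans h5)).1
      have h7 : ‖c‖ - L * t ≤ ⟪gradient f (γ t), u⟫ := by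
        have heq : ⟪gradient f (γ t), u⟫ = ⟪gradient f (γ t) - c, u⟫ + ⟪c, u⟫ := by
          rw [← inner_add_left, sub_add_cancel]
        rw [heq, hcu]; linarith
      linarith
  have hkey : ∀ t ∈ Set.Ico (0:ℝ) T, fstar ≤ f x - ‖c‖ * t + L * t ^ 2 / 2 := by
    intro t ht
    have h8 := hanti (Set.left_mem_Ico.2 hT0) ht ht.1
    simp only [hψ] at h8
    have h9 : γ 0 = x := by simp [hγ]
    rw [h9] at h8
    norm_num at h8
    have h10 := hfs (γ t)
    linarith
  have hlim : fstar ≤ f x - ‖c‖ * T + L * T ^ 2 / 2 := by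
    set q : ℝ → ℝ := fun t => f x - ‖c‖ * t + L * t ^ 2 / 2 with hq
    have hqc : ContinuousAt q T := by fun_prop
    have htend : Filter.Tendsto q (nhdsWithin T (Set.Iio T)) (nhds (q T)) :=
      hqc.continuousWithinAt.tendsto
    refine ge_of_tendsto htend ?_
    filter_upwards [Ioo_mem_nhdsLT_of_mem (Set.mem_Ioc.2 ⟨hT0, le_refl T⟩)] with t ht
    exact hkey t ⟨le_of_lt ht.1, ht.2⟩
  have hTe : f x - ‖c‖ * T + L * T ^ 2 / 2 = f x - ‖c‖ ^ 2 / (2 * L) := by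
    rw [hT]; field_simp; ring
  rw [hTe] at hlim
  have h2L : 0 < 2 * L := by linarith
  have h11 : ‖c‖ ^ 2 / (2 * L) ≤ f x - fstar := by linarith
  rw [div_le_iff₀ h2L] at h11
  calc ‖c‖ ^ 2 ≤ (f x - fstar) * (2 * L) := h11
    _ = 2 * L * (f x - fstar) := by ring

lemma geom_div (t : ℕ) (ht : 1 ≤ t) :
    Summable (fun ℓ : ℕ => ((2:ℝ)⁻¹) ^ (ℓ / t)) ∧
    ∑' ℓ : ℕ, ((2:ℝ)⁻¹) ^ (ℓ / t) = 2 * t := by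
  haveI : NeZero t := ⟨by omega⟩
  set r : ℝ := (2:ℝ)⁻¹ with hr
  have hr0 : (0:ℝ) ≤ r := by norm_num [hr]
  have hr1 : r < 1 := by norm_num [hr]
  set F : ℕ × Fin t → ℝ := fun p => r ^ p.1 with hF
  have hfiber : ∀ k : ℕ, ∑' i : Fin t, F (k, i) = (t : ℝ) * r ^ k := by
    intro k
    rw [tsum_fintype]
    simp [hF, Finset.sum_const, nsmul_eq_mul]
  have hsumF : Summable F := by
    refine (summable_prod_of_nonneg ?_).2 ⟨fun k => Summable.of_finite, ?_⟩
    · intro p; positivity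
    · simp only [hfiber]
      exact (summable_geometric_of_lt_one hr0 hr1).mul_left _
  set e := Nat.divModEquiv t with he
  have hcomp : (fun ℓ : ℕ => r ^ (ℓ / t)) = F ∘ e := rfl
  constructor
  · rw [hcomp]
    exact (e.summable_iff).2 hsumF
  · rw [hcomp]
    have h1 : ∑' a : ℕ, (F ∘ e) a = ∑' p, F p := e.tsum_eq F
    rw [h1, Summable.tsum_prod hsumF]
    simp only [hfiber]
    rw [tsum_mul_left, tsum_geometric_of_lt_one hr0 hr1]
    norm_num [hr]
    ring

end Aux

/-- Lemma C.1: for every `x ∈ ℝ^d` and `z ∈ 𝒵`, the solution of the Poisson equation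
satisfies `‖V(x,z)‖ ≤ 2 t_mix √d sup_{z'} ‖g(x,z')‖`, and consequently
`‖V(x,z)‖² ≤ 4 t_mix² d ((2AL + B)(f(x) - f⋆) + C)`. -/
theorem poisson_solution_norm_bound (d : ℕ)
    (𝒵 : Type) [MeasurableSpace 𝒵] [TopologicalSpace 𝒵] [CompactSpace 𝒵] [Nonempty 𝒵]
    (p : Kernel 𝒵 𝒵) [IsMarkovKernel p] (π : Measure 𝒵) [IsProbabilityMeasure π]
    (tmix : ℕ) (htmix : 1 ≤ tmix)
    (f : EuclideanSpace ℝ (Fin d) → ℝ)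
    (g : EuclideanSpace ℝ (Fin d) → 𝒵 → EuclideanSpace ℝ (Fin d))
    (fstar L A B C : ℝ)
    (hA : 0 ≤ A) (hB : 0 ≤ B) (hC : 0 ≤ C) (hL : 0 < L)
    (hbdd : BddBelow (Set.range f)) (hfstar : fstar = ⨅ y, f y)
    (hsmooth : ∀ y y', ‖gradient f y - gradient f y'‖ ≤ L * ‖y - y'‖)
    (hinv : π.bind (fun z => p z) = π)
    (hmix : ∀ (k : ℕ) (z : 𝒵), tvDist ((kstep p k) z) π ≤ (2 : ℝ)⁻¹ ^ (k / tmix))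
    (hgrad : ∀ x, gradient f x = ∫ z, g x z ∂π)
    (hgmeas : ∀ x, Measurable (g x))
    (hgABC : ∀ x z, ‖g x z‖ ^ 2 ≤ A * ‖gradient f x‖ ^ 2 + B * (f x - fstar) + C) :
    ∀ (x : EuclideanSpace ℝ (Fin d)) (z : 𝒵),
      ‖poissonV p f g x z‖ ≤ 2 * tmix * Real.sqrt d * (⨆ z' : 𝒵, ‖g x z'‖) ∧
      ‖poissonV p f g x z‖ ^ 2
        ≤ 4 * tmix ^ 2 * d * ((2 * A * L + B) * (f x - fstar) + C) := by
  intro x z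
  rcases Nat.eq_zero_or_pos d with hd0 | hd
  · subst hd0
    have hV : poissonV p f g x z = 0 := Subsingleton.elim _ _
    rw [hV]
    constructor
    · simp
    · simp
  -- d ≥ 1
  have hfs : fstar ≤ f x := by rw [hfstar]; exact ciInf_le hbdd x
  set R0 : ℝ := A * ‖gradient f x‖ ^ 2 + B * (f x - fstar) + C with hR0
  have hR0nn : 0 ≤ R0 := by
    have := sq_nonneg ‖gradient f x‖
    nlinarith
  have hgb : ∀ z', ‖g x z'‖ ≤ Real.sqrt R0 := by
    intro z'
    have h1 : ‖g x z'‖ ^ 2 ≤ R0 := hgABC x z'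
    have := Real.sqrt_le_sqrt h1
    rwa [Real.sqrt_sq (norm_nonneg _)] at this
  have hbddM : BddAbove (Set.range fun z' => ‖g x z'‖) := ⟨Real.sqrt R0, by
    rintro _ ⟨z', rfl⟩; exact hgb z'⟩
  set M : ℝ := ⨆ z' : 𝒵, ‖g x z'‖ with hM
  have hMb : ∀ z', ‖g x z'‖ ≤ M := fun z' => le_ciSup hbddM z'
  have hM0 : 0 ≤ M := le_trans (norm_nonneg _) (hMb z)
  have hMs : M ≤ Real.sqrt R0 := ciSup_le hgb
  have hM2 : M ^ 2 ≤ R0 := by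
    have := pow_le_pow_left₀ hM0 hMs 2
    rwa [Real.sq_sqrt hR0nn] at this
  -- term bound
  have hsm : StronglyMeasurable (g x) := (hgmeas x).stronglyMeasurable
  have hterm : ∀ ℓ : ℕ, ‖(∫ z', g x z' ∂((kstep p ℓ) z)) - gradient f x‖
      ≤ M * ((2:ℝ)⁻¹) ^ (ℓ / tmix) := by
    intro ℓ
    rw [hgrad x]
    calc ‖(∫ z', g x z' ∂((kstep p ℓ) z)) - ∫ z', g x z' ∂π‖
        ≤ M * tvDist ((kstep p ℓ) z) π :=
          integral_sub_le_tv _ _ (g x) M hMb hsm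
      _ ≤ M * ((2:ℝ)⁻¹) ^ (ℓ / tmix) :=
          mul_le_mul_of_nonneg_left (hmix ℓ z) hM0
  obtain ⟨hgs, hgsum⟩ := geom_div tmix htmix
  have hdom : Summable (fun ℓ : ℕ => M * ((2:ℝ)⁻¹) ^ (ℓ / tmix)) := hgs.mul_left M
  have hns : Summable (fun ℓ : ℕ => ‖(∫ z', g x z' ∂((kstep p ℓ) z)) - gradient f x‖) :=
    Summable.of_nonneg_of_le (fun _ => norm_nonneg _) hterm hdom
  have hd1 : (1:ℝ) ≤ Real.sqrt d := by
    rw [show (1:ℝ) = Real.sqrt 1 by simp]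
    apply Real.sqrt_le_sqrt
    exact_mod_cast hd
  have hsd0 : (0:ℝ) ≤ Real.sqrt d := Real.sqrt_nonneg _
  have htm0 : (0:ℝ) ≤ (tmix : ℝ) := Nat.cast_nonneg _
  have part1 : ‖poissonV p f g x z‖ ≤ 2 * tmix * Real.sqrt d * M := by
    calc ‖poissonV p f g x z‖
        ≤ ∑' ℓ : ℕ, ‖(∫ z', g x z' ∂((kstep p ℓ) z)) - gradient f x‖ :=
          norm_tsum_le_tsum_norm hns
      _ ≤ ∑' ℓ : ℕ, M * ((2:ℝ)⁻¹) ^ (ℓ / tmix) := Summable.tsum_le_tsum hterm hns hdom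
      _ = M * (2 * tmix) := by rw [tsum_mul_left, hgsum]
      _ = M * (2 * tmix) * 1 := by ring
      _ ≤ M * (2 * tmix) * Real.sqrt d := by
          apply mul_le_mul_of_nonneg_left hd1
          positivity
      _ = 2 * tmix * Real.sqrt d * M := by ring
  refine ⟨part1, ?_⟩
  have hgrad2 : ‖gradient f x‖ ^ 2 ≤ 2 * L * (f x - fstar) :=
    grad_sq_le f L fstar hL hbdd hfstar hsmooth x
  have hM2' : M ^ 2 ≤ (2 * A * L + B) * (f x - fstar) + C := by
    have : A * ‖gradient f x‖ ^ 2 ≤ A * (2 * L * (f x - fstar)) :=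
      mul_le_mul_of_nonneg_left hgrad2 hA
    nlinarith [hM2]
  have hsq : ‖poissonV p f g x z‖ ^ 2 ≤ (2 * tmix * Real.sqrt d * M) ^ 2 :=
    pow_le_pow_left₀ (norm_nonneg _) part1 2
  have hexp : (2 * (tmix:ℝ) * Real.sqrt d * M) ^ 2 = 4 * tmix ^ 2 * d * M ^ 2 := by
    have hds : Real.sqrt d ^ 2 = (d : ℝ) := Real.sq_sqrt (by positivity)
    calc (2 * (tmix:ℝ) * Real.sqrt d * M) ^ 2
        = 4 * tmix ^ 2 * (Real.sqrt d ^ 2) * M ^ 2 := by ring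
      _ = 4 * tmix ^ 2 * d * M ^ 2 := by rw [hds]
  calc ‖poissonV p f g x z‖ ^ 2 ≤ (2 * tmix * Real.sqrt d * M) ^ 2 := hsq
    _ = 4 * tmix ^ 2 * d * M ^ 2 := hexp
    _ ≤ 4 * tmix ^ 2 * d * ((2 * A * L + B) * (f x - fstar) + C) := by
        apply mul_le_mul_of_nonneg_left hM2'
        positivity
end

section
/- For every fixed z ∈ 𝒵, the map x ↦ V(x, z) is (2 t_mix L_g √d)-Lipschitz: ‖V(x, z) − V(x′, z)‖ ≤ 2 t_mix L_g √d · ‖x − x′‖ for all x, x′ ∈ ℝ^d. -/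
open MeasureTheory ProbabilityTheory Filter
open scoped BigOperators ENNReal RealInnerProductSpace Topology

section AuxPoisson

variable {𝒵 : Type*} [MeasurableSpace 𝒵]

lemma jordan_measure_eq' (μ ν : Measure 𝒵) [IsFiniteMeasure μ] [IsFiniteMeasure ν] :
    μ + (μ.toSignedMeasure - ν.toSignedMeasure).toJordanDecomposition.negPart
      = ν + (μ.toSignedMeasure - ν.toSignedMeasure).toJordanDecomposition.posPart := by
  set s := μ.toSignedMeasure - ν.toSignedMeasure with hs
  have h : s.toJordanDecomposition.posPart.toSignedMeasure
      - s.toJordanDecomposition.negPart.toSignedMeasure = s :=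
    s.toSignedMeasure_toJordanDecomposition
  rw [← Measure.toSignedMeasure_eq_toSignedMeasure_iff, Measure.toSignedMeasure_add,
    Measure.toSignedMeasure_add]
  rw [hs] at h
  have h2 := sub_eq_sub_iff_add_eq_add.mp h
  rw [← h2]
  abel

lemma abs_integral_sub_le_tv' [Nonempty 𝒵] (μ ν : Measure 𝒵) [IsFiniteMeasure μ]
    [IsFiniteMeasure ν] (h : 𝒵 → ℝ) (M : ℝ) (hm : Measurable h) (hb : ∀ z, |h z| ≤ M) :
    |(∫ z, h z ∂μ) - ∫ z, h z ∂ν| ≤ M * tvDist μ ν := by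
  set P := (μ.toSignedMeasure - ν.toSignedMeasure).toJordanDecomposition.posPart with hP
  set N := (μ.toSignedMeasure - ν.toSignedMeasure).toJordanDecomposition.negPart with hN
  have hint : ∀ (ρ : Measure 𝒵) [IsFiniteMeasure ρ], Integrable h ρ := by
    intro ρ _
    exact (integrable_const M).mono' hm.aestronglyMeasurable
      (Filter.Eventually.of_forall fun z => by simpa using hb z)
  have key : (∫ z, h z ∂μ) + ∫ z, h z ∂N = (∫ z, h z ∂ν) + ∫ z, h z ∂P := by
    rw [← integral_add_measure (hint μ) (hint N), ← integral_add_measure (hint ν) (hint P),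
      jordan_measure_eq']
  have habs : ∀ (ρ : Measure 𝒵) [IsFiniteMeasure ρ], |∫ z, h z ∂ρ| ≤ M * (ρ Set.univ).toReal := by
    intro ρ _
    calc |∫ z, h z ∂ρ| ≤ ∫ z, |h z| ∂ρ := by
          simpa [Real.norm_eq_abs] using norm_integral_le_integral_norm (μ := ρ) h
      _ ≤ ∫ _, M ∂ρ := integral_mono (hint ρ).abs (integrable_const M)
          (fun z => hb z)
      _ = (ρ Set.univ).toReal * M := by rw [integral_const]; simp [smul_eq_mul, Measure.real]
      _ = M * (ρ Set.univ).toReal := mul_comm _ _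
  have htv : tvDist μ ν = (P Set.univ).toReal + (N Set.univ).toReal := by
    rw [tvDist, SignedMeasure.totalVariation, ← hP, ← hN, Measure.add_apply,
      ENNReal.toReal_add (measure_ne_top _ _) (measure_ne_top _ _)]
  have h1 := habs P
  have h2 := habs N
  have heq : (∫ z, h z ∂μ) - ∫ z, h z ∂ν = (∫ z, h z ∂P) - ∫ z, h z ∂N := by linarith
  rw [heq, htv]
  calc |(∫ z, h z ∂P) - ∫ z, h z ∂N| ≤ |∫ z, h z ∂P| + |∫ z, h z ∂N| := abs_sub _ _
    _ ≤ M * (P Set.univ).toReal + M * (N Set.univ).toReal := add_le_add h1 h2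
    _ = M * ((P Set.univ).toReal + (N Set.univ).toReal) := by ring

lemma eucl_abs_apply_le_norm {d : ℕ} (v : EuclideanSpace ℝ (Fin d)) (i : Fin d) :
    |v i| ≤ ‖v‖ := by
  rw [EuclideanSpace.norm_eq, ← Real.sqrt_sq_eq_abs]
  apply Real.sqrt_le_sqrt
  have : |v i| ^ 2 ≤ ∑ j, ‖v j‖ ^ 2 := by
    have := Finset.single_le_sum (f := fun j => ‖v j‖ ^ 2)
      (fun j _ => sq_nonneg _) (Finset.mem_univ i)
    simpa [Real.norm_eq_abs, sq_abs] using this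
  simpa [sq_abs] using this

lemma norm_integral_sub_le_tv' {d : ℕ} [Nonempty 𝒵]
    (μ ν : Measure 𝒵) [IsFiniteMeasure μ] [IsFiniteMeasure ν]
    (G : 𝒵 → EuclideanSpace ℝ (Fin d)) (M : ℝ) (hm : Measurable G) (hb : ∀ z, ‖G z‖ ≤ M) :
    ‖(∫ z, G z ∂μ) - ∫ z, G z ∂ν‖ ≤ Real.sqrt d * (M * tvDist μ ν) := by
  have hM : 0 ≤ M := le_trans (norm_nonneg _) (hb (Classical.arbitrary 𝒵))
  have htv : 0 ≤ tvDist μ ν := ENNReal.toReal_nonneg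
  have hint : ∀ (ρ : Measure 𝒵) [IsFiniteMeasure ρ], Integrable G ρ := by
    intro ρ _
    exact (integrable_const M).mono' hm.aestronglyMeasurable
      (Filter.Eventually.of_forall fun z => by simpa using hb z)
  set v := (∫ z, G z ∂μ) - ∫ z, G z ∂ν with hv
  have hcoord : ∀ i : Fin d, |v i| ≤ M * tvDist μ ν := by
    intro i
    have hproj : ∀ (ρ : Measure 𝒵) [IsFiniteMeasure ρ],
        (∫ z, G z ∂ρ) i = ∫ z, G z i ∂ρ := by
      intro ρ _
      have := (ContinuousLinearMap.integral_comp_comm (EuclideanSpace.proj (𝕜 := ℝ) i)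
        (hint ρ)).symm
      simpa using this
    have hvi : v i = (∫ z, G z i ∂μ) - ∫ z, G z i ∂ν := by
      rw [hv]
      simp only [PiLp.sub_apply]
      rw [hproj μ, hproj ν]
    rw [hvi]
    refine abs_integral_sub_le_tv' μ ν (fun z => G z i) M ?_ ?_
    · exact ((EuclideanSpace.proj (𝕜 := ℝ) i).continuous.measurable).comp hm
    · exact fun z => le_trans (eucl_abs_apply_le_norm (G z) i) (hb z)
  calc ‖v‖ = Real.sqrt (∑ i, ‖v i‖ ^ 2) := EuclideanSpace.norm_eq v
    _ ≤ Real.sqrt (∑ _i : Fin d, (M * tvDist μ ν) ^ 2) := by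
        apply Real.sqrt_le_sqrt
        refine Finset.sum_le_sum fun i _ => ?_
        have := hcoord i
        have h0 : 0 ≤ |v i| := abs_nonneg _
        calc ‖v i‖ ^ 2 = |v i| ^ 2 := by rw [Real.norm_eq_abs]
          _ ≤ (M * tvDist μ ν) ^ 2 := by nlinarith
    _ = Real.sqrt (d * (M * tvDist μ ν) ^ 2) := by
        rw [Finset.sum_const, Finset.card_univ, Fintype.card_fin, nsmul_eq_mul]
    _ = Real.sqrt d * (M * tvDist μ ν) := by
        rw [Real.sqrt_mul (by positivity), Real.sqrt_sq (by positivity)]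

lemma sum_pow_div_le' (t : ℕ) (ht : 1 ≤ t) (n : ℕ) :
    ∑ ℓ ∈ Finset.range n, ((2 : ℝ)⁻¹) ^ (ℓ / t) ≤ 2 * t := by
  have hmaps : ∀ ℓ ∈ Finset.range n, ℓ / t ∈ Finset.range n := fun ℓ hℓ => by
    simp only [Finset.mem_range] at *
    exact lt_of_le_of_lt (Nat.div_le_self ℓ t) hℓ
  rw [← Finset.sum_fiberwise_of_maps_to hmaps]
  have hbound : ∀ j ∈ Finset.range n,
      ∑ ℓ ∈ (Finset.range n).filter (fun ℓ => ℓ / t = j), ((2:ℝ)⁻¹) ^ (ℓ / t)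
        ≤ (t : ℝ) * (2:ℝ)⁻¹ ^ j := by
    intro j _
    have hcongr : ∀ ℓ ∈ (Finset.range n).filter (fun ℓ => ℓ / t = j),
        ((2:ℝ)⁻¹) ^ (ℓ / t) = ((2:ℝ)⁻¹) ^ j := by
      intro ℓ hℓ
      rw [(Finset.mem_filter.mp hℓ).2]
    rw [Finset.sum_congr rfl hcongr, Finset.sum_const, nsmul_eq_mul]
    have hcard : ((Finset.range n).filter (fun ℓ => ℓ / t = j)).card ≤ t := by
      have hsub : (Finset.range n).filter (fun ℓ => ℓ / t = j)
          ⊆ Finset.Ico (t * j) (t * j + t) := by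
        intro ℓ hℓ
        have hd := (Finset.mem_filter.mp hℓ).2
        have h1 := Nat.div_add_mod ℓ t
        have h2 := Nat.mod_lt ℓ (show 0 < t from ht)
        have h3 : t * j + ℓ % t = ℓ := by rw [← hd]; exact h1
        rw [Finset.mem_Ico]
        omega
      calc ((Finset.range n).filter (fun ℓ => ℓ / t = j)).card
          ≤ (Finset.Ico (t * j) (t * j + t)).card := Finset.card_le_card hsub
        _ = t := by rw [Nat.card_Ico]; omega
    exact mul_le_mul_of_nonneg_right (by exact_mod_cast hcard) (by positivity)
  calc (∑ j ∈ Finset.range n, ∑ ℓ ∈ (Finset.range n).filter (fun ℓ => ℓ / t = j),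
        ((2:ℝ)⁻¹) ^ (ℓ / t))
      ≤ ∑ j ∈ Finset.range n, (t : ℝ) * (2:ℝ)⁻¹ ^ j := Finset.sum_le_sum hbound
    _ = (t : ℝ) * ∑ j ∈ Finset.range n, (2:ℝ)⁻¹ ^ j := by rw [Finset.mul_sum]
    _ ≤ (t : ℝ) * 2 := by
        have h2 := sum_geometric_two_le n
        have ht0 : (0:ℝ) ≤ t := Nat.cast_nonneg t
        have hle : ∑ j ∈ Finset.range n, (2:ℝ)⁻¹ ^ j ≤ 2 := by
          simpa [one_div] using h2
        nlinarith
    _ = 2 * t := mul_comm _ _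

lemma summable_pow_div' (t : ℕ) (ht : 1 ≤ t) :
    Summable (fun ℓ : ℕ => ((2 : ℝ)⁻¹) ^ (ℓ / t)) :=
  summable_of_sum_range_le (fun _ => by positivity) (sum_pow_div_le' t ht)

lemma tsum_pow_div_le' (t : ℕ) (ht : 1 ≤ t) :
    ∑' ℓ : ℕ, ((2 : ℝ)⁻¹) ^ (ℓ / t) ≤ 2 * t :=
  Real.tsum_le_of_sum_range_le (fun _ => by positivity) (sum_pow_div_le' t ht)

end AuxPoisson

/-- Lemma C.3: for every fixed `z ∈ 𝒵`, the map `x ↦ V(x, z)` is `(2 t_mix L_g √d)`-Lipschitz: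
`‖V(x,z) - V(x',z)‖ ≤ 2 t_mix L_g √d ‖x - x'‖` for all `x, x' ∈ ℝ^d`. -/
theorem poisson_solution_lipschitz (d : ℕ)
    (𝒵 : Type) [MeasurableSpace 𝒵] [TopologicalSpace 𝒵] [CompactSpace 𝒵] [Nonempty 𝒵]
    (p : Kernel 𝒵 𝒵) [IsMarkovKernel p] (π : Measure 𝒵) [IsProbabilityMeasure π]
    (tmix : ℕ) (htmix : 1 ≤ tmix)
    (f : EuclideanSpace ℝ (Fin d) → ℝ)
    (g : EuclideanSpace ℝ (Fin d) → 𝒵 → EuclideanSpace ℝ (Fin d))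
    (fstar Lg A B C : ℝ)
    (hA : 0 ≤ A) (hB : 0 ≤ B) (hC : 0 ≤ C)
    (hbdd : BddBelow (Set.range f)) (hfstar : fstar = ⨅ y, f y)
    (hinv : π.bind (fun z => p z) = π)
    (hmix : ∀ (k : ℕ) (z : 𝒵), tvDist ((kstep p k) z) π ≤ (2 : ℝ)⁻¹ ^ (k / tmix))
    (hgrad : ∀ x, gradient f x = ∫ z, g x z ∂π)
    (hgmeas : ∀ x, Measurable (g x))
    (hgLip : ∀ z x y, ‖g x z - g y z‖ ≤ Lg * ‖x - y‖)
    (hgABC : ∀ x z, ‖g x z‖ ^ 2 ≤ A * ‖gradient f x‖ ^ 2 + B * (f x - fstar) + C) :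
    ∀ (z : 𝒵) (x x' : EuclideanSpace ℝ (Fin d)),
      ‖poissonV p f g x z - poissonV p f g x' z‖ ≤ 2 * tmix * Lg * Real.sqrt d * ‖x - x'‖ := by
  intro z x x'
  obtain ⟨z₀⟩ := (inferInstance : Nonempty 𝒵)
  have hLnn : 0 ≤ Lg * ‖x - x'‖ := le_trans (norm_nonneg _) (hgLip z₀ x x')
  have hgbd : ∀ y : EuclideanSpace ℝ (Fin d), ∀ z' : 𝒵, ‖g y z'‖ ≤
      Real.sqrt (A * ‖gradient f y‖ ^ 2 + B * (f y - fstar) + C) := by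
    intro y z'
    calc ‖g y z'‖ = Real.sqrt (‖g y z'‖ ^ 2) := (Real.sqrt_sq (norm_nonneg _)).symm
      _ ≤ _ := Real.sqrt_le_sqrt (hgABC y z')
  have hbase := summable_pow_div' tmix htmix
  have hintg : ∀ (y : EuclideanSpace ℝ (Fin d)) (ρ : Measure 𝒵) [IsFiniteMeasure ρ],
      Integrable (g y) ρ := by
    intro y ρ _
    exact (integrable_const _).mono' (hgmeas y).aestronglyMeasurable
      (Filter.Eventually.of_forall fun z' => by simpa using hgbd y z')
  -- per-term bound for summability
  have hterm : ∀ (y : EuclideanSpace ℝ (Fin d)) (ℓ : ℕ),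
      ‖(∫ z', g y z' ∂((kstep p ℓ) z)) - gradient f y‖
        ≤ (Real.sqrt d * Real.sqrt (A * ‖gradient f y‖ ^ 2 + B * (f y - fstar) + C))
          * (2:ℝ)⁻¹ ^ (ℓ / tmix) := by
    intro y ℓ
    have h0 := norm_integral_sub_le_tv' ((kstep p ℓ) z) π (g y)
      (Real.sqrt (A * ‖gradient f y‖ ^ 2 + B * (f y - fstar) + C)) (hgmeas y) (hgbd y)
    rw [← hgrad y] at h0
    refine h0.trans ?_
    have hM : (0:ℝ) ≤ Real.sqrt (A * ‖gradient f y‖ ^ 2 + B * (f y - fstar) + C) :=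
      Real.sqrt_nonneg _
    refine le_trans (mul_le_mul_of_nonneg_left
      (mul_le_mul_of_nonneg_left (hmix ℓ z) hM) (Real.sqrt_nonneg _)) ?_
    exact le_of_eq (by ring)
  set a : ℕ → EuclideanSpace ℝ (Fin d) :=
    fun ℓ => (∫ z', g x z' ∂((kstep p ℓ) z)) - gradient f x with ha
  set b : ℕ → EuclideanSpace ℝ (Fin d) :=
    fun ℓ => (∫ z', g x' z' ∂((kstep p ℓ) z)) - gradient f x' with hb
  have hsa : Summable a := by
    refine Summable.of_norm_bounded (hbase.mul_left
      (Real.sqrt d * Real.sqrt (A * ‖gradient f x‖ ^ 2 + B * (f x - fstar) + C))) ?_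
    intro ℓ
    exact hterm x ℓ
  have hsb : Summable b := by
    refine Summable.of_norm_bounded (hbase.mul_left
      (Real.sqrt d * Real.sqrt (A * ‖gradient f x'‖ ^ 2 + B * (f x' - fstar) + C))) ?_
    intro ℓ
    exact hterm x' ℓ
  have hdiff : poissonV p f g x z - poissonV p f g x' z = ∑' ℓ, (a ℓ - b ℓ) := by
    simp only [poissonV]
    exact (Summable.tsum_sub hsa hsb).symm
  have hab : ∀ ℓ : ℕ, ‖a ℓ - b ℓ‖
      ≤ (Real.sqrt d * (Lg * ‖x - x'‖)) * (2:ℝ)⁻¹ ^ (ℓ / tmix) := by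
    intro ℓ
    have h1 : a ℓ - b ℓ = (∫ z', (g x z' - g x' z') ∂((kstep p ℓ) z))
        - ∫ z', (g x z' - g x' z') ∂π := by
      simp only [ha, hb, hgrad x, hgrad x']
      rw [integral_sub (hintg x _) (hintg x' _), integral_sub (hintg x _) (hintg x' _)]
      abel
    rw [h1]
    have h2 := norm_integral_sub_le_tv' ((kstep p ℓ) z) π (fun z' => g x z' - g x' z')
      (Lg * ‖x - x'‖) ((hgmeas x).sub (hgmeas x')) (fun z' => hgLip z' x x')
    refine h2.trans ?_
    refine le_trans (mul_le_mul_of_nonneg_left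
      (mul_le_mul_of_nonneg_left (hmix ℓ z) hLnn) (Real.sqrt_nonneg _)) ?_
    exact le_of_eq (by ring)
  rw [hdiff]
  have hsum2 : Summable fun ℓ : ℕ =>
      (Real.sqrt d * (Lg * ‖x - x'‖)) * (2:ℝ)⁻¹ ^ (ℓ / tmix) := hbase.mul_left _
  calc ‖∑' ℓ, (a ℓ - b ℓ)‖
      ≤ ∑' ℓ : ℕ, (Real.sqrt d * (Lg * ‖x - x'‖)) * (2:ℝ)⁻¹ ^ (ℓ / tmix) :=
        tsum_of_norm_bounded hsum2.hasSum hab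
    _ = (Real.sqrt d * (Lg * ‖x - x'‖)) * ∑' ℓ : ℕ, (2:ℝ)⁻¹ ^ (ℓ / tmix) := tsum_mul_left
    _ ≤ (Real.sqrt d * (Lg * ‖x - x'‖)) * (2 * tmix) := by
        refine mul_le_mul_of_nonneg_left (tsum_pow_div_le' tmix htmix) ?_
        exact mul_nonneg (Real.sqrt_nonneg _) hLnn
    _ = 2 * tmix * Lg * Real.sqrt d * ‖x - x'‖ := by ring
end

section
/- Suppose 2AL + B > 0. Then for every x ∈ ℝ^d and z ∈ 𝒵: ⟨∇f(x), V(x, z)⟩ ≤ 2 t_mix √d ( √(2L(2AL + B)) · (f(x) − f⋆) + √( L C² / (2(2AL + B)) ) ). -/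
open MeasureTheory ProbabilityTheory Filter
open scoped BigOperators ENNReal RealInnerProductSpace Topology

section AuxPoisson

lemma gradient_zero_of_not_diff' {F : Type*} [NormedAddCommGroup F] [InnerProductSpace ℝ F]
    [CompleteSpace F] {f : F → ℝ} {x : F} (h : ¬ DifferentiableAt ℝ f x) :
    gradient f x = 0 := by
  rw [gradient, fderiv_zero_of_not_differentiableAt h]
  simp

lemma gradient_sq_le' {F : Type*} [NormedAddCommGroup F] [InnerProductSpace ℝ F]
    [CompleteSpace F] (f : F → ℝ) (fstar L : ℝ)
    (hL : 0 < L) (hbdd : BddBelow (Set.range f)) (hfstar : fstar = ⨅ y, f y)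
    (hsmooth : ∀ y y', ‖gradient f y - gradient f y'‖ ≤ L * ‖y - y'‖)
    (x : F) : ‖gradient f x‖ ^ 2 ≤ 2 * L * (f x - fstar) := by
  have hfs : ∀ y, fstar ≤ f y := fun y => hfstar ▸ ciInf_le hbdd y
  set n := ‖gradient f x‖ with hn
  rcases eq_or_lt_of_le (norm_nonneg (gradient f x)) with h0 | hpos
  · rw [show n = 0 from h0.symm]; nlinarith [hfs x, hL]
  · set v : F := L⁻¹ • gradient f x with hv
    have hnv : ‖v‖ = n / L := by
      rw [hv, norm_smul, norm_inv, Real.norm_eq_abs, abs_of_pos hL]; ring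
    have key : ∀ s : ℝ, s ∈ Set.Ico (0:ℝ) 1 → fstar ≤ f x - n^2/L * (s - s^2/2) := by
      intro s0 hs0
      obtain ⟨hs00, hs01⟩ := hs0
      have hdistb : ∀ s : ℝ, 0 ≤ s → ‖gradient f x - gradient f (x - s • v)‖ ≤ s * n := by
        intro s hs
        have h1 := hsmooth x (x - s • v)
        have hxy : ‖x - (x - s • v)‖ = s * (n / L) := by
          rw [sub_sub_cancel, norm_smul, Real.norm_eq_abs, abs_of_nonneg hs, hnv]
        rw [hxy] at h1
        calc ‖gradient f x - gradient f (x - s • v)‖ ≤ L * (s * (n/L)) := h1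
          _ = s * n := by field_simp
      have hdiffpt : ∀ s : ℝ, s ∈ Set.Icc 0 s0 →
          HasGradientAt f (gradient f (x - s • v)) (x - s • v) := by
        intro s hs
        have hslt : s < 1 := lt_of_le_of_lt hs.2 hs01
        have hdist := hdistb s hs.1
        have hne : gradient f (x - s • v) ≠ 0 := by
          intro hzero
          rw [hzero, sub_zero] at hdist
          nlinarith [hs.1]
        have hdiff : DifferentiableAt ℝ f (x - s • v) := by
          by_contra hnd
          exact hne (gradient_zero_of_not_diff' hnd)
        exact hdiff.hasGradientAt
      set φ : ℝ → ℝ := fun s => f (x - s • v) + n^2/L * (s - s^2/2) with hφ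
      have hφderiv : ∀ s : ℝ, s ∈ Set.Icc 0 s0 →
          HasDerivAt φ (-(inner ℝ (gradient f (x - s • v)) v : ℝ) + n^2/L * (1 - s)) s := by
        intro s hs
        have hγ : HasDerivAt (fun s : ℝ => x - s • v) (-v) s := by
          have h1 : HasDerivAt (fun s : ℝ => s • v) v s := by
            simpa using (hasDerivAt_id s).smul_const v
          simpa using h1.const_sub x
        have hf1 : HasDerivAt (fun s : ℝ => f (x - s • v))
            ((InnerProductSpace.toDual ℝ _ (gradient f (x - s • v))) (-v)) s :=
          ((hdiffpt s hs).hasFDerivAt.comp_hasDerivAt s hγ)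
        have hf1' : HasDerivAt (fun s : ℝ => f (x - s • v))
            (-(inner ℝ (gradient f (x - s • v)) v : ℝ)) s := by
          simpa [InnerProductSpace.toDual_apply_apply, inner_neg_right] using hf1
        have hp : HasDerivAt (fun s : ℝ => n^2/L * (s - s^2/2)) (n^2/L * (1 - s)) s := by
          have h3 : HasDerivAt (fun s : ℝ => s - s^2/2) (1 - s) s := by
            have h2 : HasDerivAt (fun s : ℝ => s^2) (2*s) s := by
              simpa using hasDerivAt_pow 2 s
            exact ((hasDerivAt_id' s).sub (h2.div_const 2)).congr_deriv (by ring)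
          simpa using h3.const_mul (n^2/L)
        exact hf1'.add hp
      have hnonpos : ∀ s ∈ Set.Icc (0:ℝ) s0,
          (-(inner ℝ (gradient f (x - s • v)) v : ℝ) + n^2/L*(1-s)) ≤ 0 := by
        intro s hs
        have hdist := hdistb s hs.1
        have hinner : (inner ℝ (gradient f x) v : ℝ) = n^2/L := by
          rw [hv, real_inner_smul_right, real_inner_self_eq_norm_sq]
          field_simp
          rfl
        have hsplit : (inner ℝ (gradient f (x - s • v)) v : ℝ)
            = (inner ℝ (gradient f x) v : ℝ) - (inner ℝ (gradient f x - gradient f (x - s • v)) v : ℝ) := by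
          rw [inner_sub_left]; ring
        have habs : |(inner ℝ (gradient f x - gradient f (x - s • v)) v : ℝ)| ≤ (s*n)*(n/L) := by
          calc |(inner ℝ (gradient f x - gradient f (x - s • v)) v : ℝ)|
              ≤ ‖gradient f x - gradient f (x - s • v)‖ * ‖v‖ := abs_real_inner_le_norm _ _
            _ ≤ (s*n)*(n/L) := by
                rw [hnv]
                apply mul_le_mul_of_nonneg_right hdist
                positivity
        rw [hsplit, hinner]
        have := abs_le.mp habs
        have hsn : s * n * (n / L) = s * (n^2/L) := by ring
        nlinarith [this.2]
      have hmono : AntitoneOn φ (Set.Icc 0 s0) := by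
        apply antitoneOn_of_deriv_nonpos (convex_Icc 0 s0)
          (fun s hs => (hφderiv s hs).continuousAt.continuousWithinAt)
        · intro s hs
          rw [interior_Icc] at hs
          exact (hφderiv s (Set.Ioo_subset_Icc_self hs)).differentiableAt.differentiableWithinAt
        · intro s hs
          rw [interior_Icc] at hs
          rw [(hφderiv s (Set.Ioo_subset_Icc_self hs)).deriv]
          exact hnonpos s (Set.Ioo_subset_Icc_self hs)
      have h1 := hmono (Set.left_mem_Icc.mpr hs00) (Set.right_mem_Icc.mpr hs00) hs00
      have hφ0 : φ 0 = f x := by simp [hφ]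
      have h2 := hfs (x - s0 • v)
      simp only [hφ] at h1 hφ0
      linarith
    have hlim : Tendsto (fun s : ℝ => f x - n^2/L * (s - s^2/2)) (𝓝[<] (1:ℝ))
        (𝓝 (f x - n^2/L * (1 - 1^2/2))) := by
      apply Tendsto.mono_left _ nhdsWithin_le_nhds
      exact (Continuous.tendsto (by continuity) 1)
    have hfinal : fstar ≤ f x - n^2/L * (1 - 1^2/2) := by
      refine ge_of_tendsto hlim ?_
      filter_upwards [Ico_mem_nhdsLT_of_mem (Set.right_mem_Ioc.mpr one_pos)] with s hs
      exact key s hs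
    have h2L : (0:ℝ) < 2*L := by linarith
    have h3 : n^2/(2*L) ≤ f x - fstar := by
      have : n^2/L * (1 - 1^2/2) = n^2/(2*L) := by ring
      linarith [this ▸ hfinal]
    calc n^2 = n^2/(2*L) * (2*L) := by field_simp
      _ ≤ (f x - fstar) * (2*L) := mul_le_mul_of_nonneg_right h3 (le_of_lt h2L)
      _ = 2*L*(f x - fstar) := by ring

lemma integral_tv_bound' {𝒵 : Type*} [MeasurableSpace 𝒵] {E : Type*}
    [NormedAddCommGroup E] [NormedSpace ℝ E] [MeasurableSpace E] [BorelSpace E]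
    [SecondCountableTopology E] [CompleteSpace E]
    (μ ν : Measure 𝒵) [IsFiniteMeasure μ] [IsFiniteMeasure ν]
    {h : 𝒵 → E} (hm : Measurable h) {M : ℝ}
    (hM : ∀ z, ‖h z‖ ≤ M) :
    ‖(∫ z, h z ∂μ) - ∫ z, h z ∂ν‖ ≤ M * tvDist μ ν := by
  have hint : ∀ (ρ : Measure 𝒵) [IsFiniteMeasure ρ], Integrable h ρ := by
    intro ρ _
    exact (integrable_const M).mono' hm.aestronglyMeasurable (ae_of_all _ hM)
  set P := (μ.toSignedMeasure - ν.toSignedMeasure).toJordanDecomposition.posPart with hP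
  set N := (μ.toSignedMeasure - ν.toSignedMeasure).toJordanDecomposition.negPart with hN
  have hJ : P.toSignedMeasure - N.toSignedMeasure = μ.toSignedMeasure - ν.toSignedMeasure :=
    (μ.toSignedMeasure - ν.toSignedMeasure).toSignedMeasure_toJordanDecomposition
  have key : μ + N = ν + P := by
    ext E hE
    have h1 : (P.toSignedMeasure - N.toSignedMeasure) E = (μ.toSignedMeasure - ν.toSignedMeasure) E := by rw [hJ]
    rw [VectorMeasure.sub_apply, VectorMeasure.sub_apply,
      Measure.toSignedMeasure_apply_measurable hE, Measure.toSignedMeasure_apply_measurable hE,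
      Measure.toSignedMeasure_apply_measurable hE, Measure.toSignedMeasure_apply_measurable hE] at h1
    rw [Measure.add_apply, Measure.add_apply]
    rw [← ENNReal.toReal_eq_toReal_iff' (by finiteness) (by finiteness)]
    rw [ENNReal.toReal_add (by finiteness) (by finiteness),
      ENNReal.toReal_add (by finiteness) (by finiteness)]
    simp only [Measure.real] at h1
    linarith
  have hsplit : (∫ z, h z ∂μ) - ∫ z, h z ∂ν = (∫ z, h z ∂P) - ∫ z, h z ∂N := by
    have h2 : (∫ z, h z ∂μ) + ∫ z, h z ∂N = (∫ z, h z ∂ν) + ∫ z, h z ∂P := by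
      rw [← integral_add_measure (hint μ) (hint N), ← integral_add_measure (hint ν) (hint P), key]
    rw [sub_eq_sub_iff_add_eq_add]
    rw [h2]; abel
  rw [hsplit]
  have hbound : ∀ (ρ : Measure 𝒵) [IsFiniteMeasure ρ],
      ‖∫ z, h z ∂ρ‖ ≤ M * (ρ Set.univ).toReal := by
    intro ρ _
    calc ‖∫ z, h z ∂ρ‖ ≤ ∫ z, ‖h z‖ ∂ρ := norm_integral_le_integral_norm _
      _ ≤ ∫ _, M ∂ρ := integral_mono (hint ρ).norm (integrable_const M) hM
      _ = (ρ Set.univ).toReal * M := by rw [integral_const]; simp [smul_eq_mul, Measure.real]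
      _ = M * (ρ Set.univ).toReal := by ring
  have htv : tvDist μ ν = (P Set.univ).toReal + (N Set.univ).toReal := by
    rw [tvDist, SignedMeasure.totalVariation, Measure.add_apply,
      ENNReal.toReal_add (by finiteness) (by finiteness)]
  calc ‖(∫ z, h z ∂P) - ∫ z, h z ∂N‖ ≤ ‖∫ z, h z ∂P‖ + ‖∫ z, h z ∂N‖ := norm_sub_le _ _
    _ ≤ M * (P Set.univ).toReal + M * (N Set.univ).toReal := add_le_add (hbound P) (hbound N)
    _ = M * tvDist μ ν := by rw [htv]; ring

lemma halfpow_sum_le' (t : ℕ) (ht : 1 ≤ t) (n : ℕ) :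
    ∑ ℓ ∈ Finset.range n, ((2:ℝ)⁻¹) ^ (ℓ / t) ≤ 2 * t := by
  have ht0 : 0 < t := ht
  have hmain : ∀ m : ℕ, ∑ ℓ ∈ Finset.range (t * m), ((2:ℝ)⁻¹) ^ (ℓ / t)
      = t * ∑ q ∈ Finset.range m, ((2:ℝ)⁻¹) ^ q := by
    intro m
    induction m with
    | zero => simp
    | succ m ih =>
      rw [Nat.mul_succ, Finset.sum_range_add, ih, Finset.sum_range_succ]
      have : ∀ i ∈ Finset.range t, ((2:ℝ)⁻¹) ^ ((t * m + i) / t) = ((2:ℝ)⁻¹) ^ m := by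
        intro i hi
        rw [Nat.mul_add_div ht0, Nat.div_eq_of_lt (Finset.mem_range.mp hi), add_zero]
      rw [Finset.sum_congr rfl this, Finset.sum_const, Finset.card_range]
      ring
  calc ∑ ℓ ∈ Finset.range n, ((2:ℝ)⁻¹) ^ (ℓ / t)
      ≤ ∑ ℓ ∈ Finset.range (t * n), ((2:ℝ)⁻¹) ^ (ℓ / t) := by
        apply Finset.sum_le_sum_of_subset_of_nonneg
        · exact Finset.range_subset_range.mpr (Nat.le_mul_of_pos_left n ht0)
        · intro i _ _; positivity
    _ = t * ∑ q ∈ Finset.range n, ((2:ℝ)⁻¹) ^ q := hmain n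
    _ ≤ t * 2 := by
        apply mul_le_mul_of_nonneg_left _ (by positivity)
        simpa [one_div] using sum_geometric_two_le n
    _ = 2 * t := by ring

end AuxPoisson

/-- Lemma C.4: if `2AL + B > 0`, then for every `x ∈ ℝ^d` and `z ∈ 𝒵`,
`⟨∇f(x), V(x,z)⟩ ≤ 2 t_mix √d (√(2L(2AL + B)) (f(x) - f⋆) + √(L C²/(2(2AL + B))))`. -/
theorem poisson_solution_inner_bound (d : ℕ)
    (𝒵 : Type) [MeasurableSpace 𝒵] [TopologicalSpace 𝒵] [CompactSpace 𝒵] [Nonempty 𝒵]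
    (p : Kernel 𝒵 𝒵) [IsMarkovKernel p] (π : Measure 𝒵) [IsProbabilityMeasure π]
    (tmix : ℕ) (htmix : 1 ≤ tmix)
    (f : EuclideanSpace ℝ (Fin d) → ℝ)
    (g : EuclideanSpace ℝ (Fin d) → 𝒵 → EuclideanSpace ℝ (Fin d))
    (fstar L A B C : ℝ)
    (hA : 0 ≤ A) (hB : 0 ≤ B) (hC : 0 ≤ C) (hL : 0 < L)
    (hALB : 0 < 2 * A * L + B)
    (hbdd : BddBelow (Set.range f)) (hfstar : fstar = ⨅ y, f y)
    (hsmooth : ∀ y y', ‖gradient f y - gradient f y'‖ ≤ L * ‖y - y'‖)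
    (hinv : π.bind (fun z => p z) = π)
    (hmix : ∀ (k : ℕ) (z : 𝒵), tvDist ((kstep p k) z) π ≤ (2 : ℝ)⁻¹ ^ (k / tmix))
    (hgrad : ∀ x, gradient f x = ∫ z, g x z ∂π)
    (hgmeas : ∀ x, Measurable (g x))
    (hgABC : ∀ x z, ‖g x z‖ ^ 2 ≤ A * ‖gradient f x‖ ^ 2 + B * (f x - fstar) + C) :
    ∀ (x : EuclideanSpace ℝ (Fin d)) (z : 𝒵),
      (inner ℝ (gradient f x) (poissonV p f g x z) : ℝ)
        ≤ 2 * tmix * Real.sqrt d *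
            (Real.sqrt (2 * L * (2 * A * L + B)) * (f x - fstar)
              + Real.sqrt (L * C ^ 2 / (2 * (2 * A * L + B)))) := by
  intro x z
  have hfs : ∀ y, fstar ≤ f y := fun y => hfstar ▸ ciInf_le hbdd y
  set n := ‖gradient f x‖ with hn
  set δ := f x - fstar with hδ
  have hδ0 : 0 ≤ δ := by simp [hδ]; linarith [hfs x]
  set K := 2 * A * L + B with hK
  rcases Nat.eq_zero_or_pos d with hd0 | hd1
  · -- d = 0 : trivial
    subst hd0
    have hgz : gradient f x = 0 := Subsingleton.elim _ _
    rw [hgz, inner_zero_left]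
    simp [Real.sqrt_zero]
  · -- main case
    have hn2 : n ^ 2 ≤ 2 * L * δ := gradient_sq_le' f fstar L hL hbdd hfstar hsmooth x
    set G2 := A * n ^ 2 + B * δ + C with hG2
    have hG2nn : 0 ≤ G2 := by positivity
    set Gb := Real.sqrt G2 with hGb
    have hgb : ∀ z', ‖g x z'‖ ≤ Gb := by
      intro z'
      rw [hGb, show ‖g x z'‖ = Real.sqrt (‖g x z'‖ ^ 2) from (Real.sqrt_sq (norm_nonneg _)).symm]
      exact Real.sqrt_le_sqrt (hgABC x z')
    set a : ℕ → EuclideanSpace ℝ (Fin d) :=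
      fun ℓ => (∫ z', g x z' ∂((kstep p ℓ) z)) - gradient f x with ha
    have hanorm : ∀ ℓ, ‖a ℓ‖ ≤ Gb * ((2:ℝ)⁻¹) ^ (ℓ / tmix) := by
      intro ℓ
      have : a ℓ = (∫ z', g x z' ∂((kstep p ℓ) z)) - ∫ z', g x z' ∂π := by
        rw [ha]; rw [hgrad x]
      rw [this]
      calc ‖(∫ z', g x z' ∂((kstep p ℓ) z)) - ∫ z', g x z' ∂π‖
          ≤ Gb * tvDist ((kstep p ℓ) z) π := integral_tv_bound' _ _ (hgmeas x) hgb
        _ ≤ Gb * ((2:ℝ)⁻¹) ^ (ℓ / tmix) :=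
            mul_le_mul_of_nonneg_left (hmix ℓ z) (Real.sqrt_nonneg _)
    have hbsum : Summable (fun ℓ : ℕ => Gb * ((2:ℝ)⁻¹) ^ (ℓ / tmix)) := by
      apply summable_of_sum_range_le (c := Gb * (2 * tmix)) (fun ℓ => by positivity)
      intro m
      rw [← Finset.mul_sum]
      exact mul_le_mul_of_nonneg_left (halfpow_sum_le' tmix htmix m) (Real.sqrt_nonneg _)
    have hnormsum : Summable (fun ℓ => ‖a ℓ‖) :=
      Summable.of_nonneg_of_le (fun ℓ => norm_nonneg _) hanorm hbsum
    have hasum : Summable a := Summable.of_norm hnormsum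
    have hVnorm : ‖poissonV p f g x z‖ ≤ Gb * (2 * tmix) := by
      calc ‖poissonV p f g x z‖ = ‖∑' ℓ, a ℓ‖ := rfl
        _ ≤ ∑' ℓ, ‖a ℓ‖ := norm_tsum_le_tsum_norm hnormsum
        _ ≤ ∑' ℓ, Gb * ((2:ℝ)⁻¹) ^ (ℓ / tmix) := Summable.tsum_le_tsum hanorm hnormsum hbsum
        _ = Gb * ∑' ℓ : ℕ, ((2:ℝ)⁻¹) ^ (ℓ / tmix) := tsum_mul_left
        _ ≤ Gb * (2 * tmix) := by
            apply mul_le_mul_of_nonneg_left _ (Real.sqrt_nonneg _)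
            apply Real.tsum_le_of_sum_range_le (fun ℓ => by positivity)
            exact halfpow_sum_le' tmix htmix
    have hinner : (inner ℝ (gradient f x) (poissonV p f g x z) : ℝ)
        ≤ n * (Gb * (2 * tmix)) := by
      calc (inner ℝ (gradient f x) (poissonV p f g x z) : ℝ)
          ≤ n * ‖poissonV p f g x z‖ := real_inner_le_norm _ _
        _ ≤ n * (Gb * (2 * tmix)) := mul_le_mul_of_nonneg_left hVnorm (norm_nonneg _)
    -- scalar algebra
    have hKpos : 0 < K := hALB
    have hscal : n * Gb ≤ Real.sqrt (2 * L * K) * δ + Real.sqrt (L * C ^ 2 / (2 * K)) := by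
      have h1 : n * Gb = Real.sqrt (n ^ 2 * G2) := by
        rw [Real.sqrt_mul (sq_nonneg n), Real.sqrt_sq (norm_nonneg _)]
      have h2 : n ^ 2 * G2 ≤ 2 * L * K * δ ^ 2 + 2 * L * C * δ := by
        rw [hG2, hK]
        nlinarith [sq_nonneg n, mul_le_mul hn2 hn2 (sq_nonneg n) (by positivity : (0:ℝ) ≤ 2*L*δ),
          mul_le_mul_of_nonneg_right hn2 hδ0, mul_le_mul_of_nonneg_right hn2 hC,
          mul_le_mul_of_nonneg_left (mul_le_mul_of_nonneg_right hn2 hδ0) hB]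
      have h3 : 2 * L * K * δ ^ 2 + 2 * L * C * δ
          ≤ (Real.sqrt (2 * L * K) * δ + Real.sqrt (L * C ^ 2 / (2 * K))) ^ 2 := by
        have hs2 : Real.sqrt (2 * L * K) ^ 2 = 2 * L * K := Real.sq_sqrt (by positivity)
        have hst : Real.sqrt (2 * L * K) * Real.sqrt (L * C ^ 2 / (2 * K)) = L * C := by
          rw [← Real.sqrt_mul (by positivity)]
          have : 2 * L * K * (L * C ^ 2 / (2 * K)) = (L * C) ^ 2 := by
            field_simp
          rw [this, Real.sqrt_sq (by positivity)]
        have expand : (Real.sqrt (2 * L * K) * δ + Real.sqrt (L * C ^ 2 / (2 * K))) ^ 2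
            = Real.sqrt (2 * L * K) ^ 2 * δ ^ 2
              + 2 * (Real.sqrt (2 * L * K) * Real.sqrt (L * C ^ 2 / (2 * K))) * δ
              + Real.sqrt (L * C ^ 2 / (2 * K)) ^ 2 := by ring
        rw [expand, hs2, hst]
        linarith [sq_nonneg (Real.sqrt (L * C ^ 2 / (2 * K)))]
      calc n * Gb = Real.sqrt (n ^ 2 * G2) := h1
        _ ≤ Real.sqrt ((Real.sqrt (2 * L * K) * δ + Real.sqrt (L * C ^ 2 / (2 * K))) ^ 2) :=
            Real.sqrt_le_sqrt (h2.trans h3)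
        _ = Real.sqrt (2 * L * K) * δ + Real.sqrt (L * C ^ 2 / (2 * K)) :=
            Real.sqrt_sq (by positivity)
    have hsd : 1 ≤ Real.sqrt d := by
      rw [show (1:ℝ) = Real.sqrt 1 from (Real.sqrt_one).symm]
      exact Real.sqrt_le_sqrt (by exact_mod_cast hd1)
    have hrhs0 : 0 ≤ Real.sqrt (2 * L * K) * δ + Real.sqrt (L * C ^ 2 / (2 * K)) := by positivity
    calc (inner ℝ (gradient f x) (poissonV p f g x z) : ℝ)
        ≤ n * (Gb * (2 * tmix)) := hinner
      _ = 2 * tmix * (n * Gb) := by ring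
      _ ≤ 2 * tmix * (Real.sqrt (2 * L * K) * δ + Real.sqrt (L * C ^ 2 / (2 * K))) := by
          apply mul_le_mul_of_nonneg_left hscal (by positivity)
      _ ≤ 2 * tmix * Real.sqrt d * (Real.sqrt (2 * L * K) * δ + Real.sqrt (L * C ^ 2 / (2 * K))) := by
          rw [mul_assoc (2 * (tmix:ℝ))]
          exact mul_le_mul_of_nonneg_left (le_mul_of_one_le_left hrhs0 hsd) (by positivity)
      _ = 2 * tmix * Real.sqrt d *
            (Real.sqrt (2 * L * (2 * A * L + B)) * (f x - fstar)
              + Real.sqrt (L * C ^ 2 / (2 * (2 * A * L + B)))) := by rw [hK, hδ]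
end

section
/- Let α_j = a/(j + K₀) with a, K₀, μ > 0 and K₀ ≥ μa, and ζ_{m,n} = ∏_{j=m}^{n}(1 − μα_j). Then for all natural numbers m ≤ n: ζ_{m,n} ≤ ((m + K₀)/(n + K₀ + 1))^{μa}; and if moreover m ≥ 1, ζ_{m,n} ≤ e · ((m + K₀ − 1)/(n + K₀ + 1))^{μa}. -/
open scoped BigOperators

/-- Lemma E.1: for stepsizes `α_j = a/(j+K₀)` with `a, K₀, μ > 0` and `K₀ ≥ μ a`, and
`ζ_{m,n} = ∏_{j=m}^{n} (1 - μ α_j)`, for all naturals `m ≤ n`: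
`ζ_{m,n} ≤ ((m+K₀)/(n+K₀+1))^{μ a}`, and if moreover `m ≥ 1`,
`ζ_{m,n} ≤ e ((m+K₀-1)/(n+K₀+1))^{μ a}`. -/
theorem zeta_product_bound (a K0 μ : ℝ)
    (ha : 0 < a) (hK0pos : 0 < K0) (hμ : 0 < μ) (hK0 : μ * a ≤ K0) :
    ∀ m n : ℕ, m ≤ n →
      ((∏ j ∈ Finset.Icc m n, (1 - μ * (a / (j + K0))))
          ≤ (((m : ℝ) + K0) / ((n : ℝ) + K0 + 1)) ^ (μ * a))
      ∧ (1 ≤ m →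
        (∏ j ∈ Finset.Icc m n, (1 - μ * (a / (j + K0))))
          ≤ Real.exp 1 * (((m : ℝ) + K0 - 1) / ((n : ℝ) + K0 + 1)) ^ (μ * a)) := by
  set c := μ * a with hc
  have hc0 : 0 < c := mul_pos hμ ha
  -- key pointwise inequality
  have key : ∀ t : ℝ, c ≤ t → 1 - c / t ≤ (t / (t + 1)) ^ c := by
    intro t hct
    have ht : 0 < t := lt_of_lt_of_le hc0 hct
    have ht1 : 0 < t + 1 := by linarith
    have hbase : 0 < t / (t + 1) := div_pos ht ht1
    rw [Real.rpow_def_of_pos hbase]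
    have h1 : 1 - c / t ≤ Real.exp (-(c / t)) := by
      have := Real.add_one_le_exp (-(c / t)); linarith
    refine h1.trans (Real.exp_le_exp.mpr ?_)
    -- -(c/t) ≤ c * log (t/(t+1))
    have hlog : Real.log ((t + 1) / t) ≤ 1 / t := by
      have := Real.log_le_sub_one_of_pos (div_pos ht1 ht)
      have : Real.log ((t + 1) / t) ≤ (t + 1) / t - 1 := this
      have he : (t + 1) / t - 1 = 1 / t := by field_simp; ring
      linarith [he ▸ this]
    have hlogdiv : Real.log (t / (t + 1)) = -Real.log ((t + 1) / t) := by
      rw [← Real.log_inv]; congr 1; field_simp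
    rw [hlogdiv]
    have : c * Real.log ((t + 1) / t) ≤ c * (1 / t) :=
      mul_le_mul_of_nonneg_left hlog hc0.le
    have h2 : c * (1 / t) = c / t := by ring
    nlinarith
  have hterm_nonneg : ∀ j : ℕ, 0 ≤ 1 - c / ((j : ℝ) + K0) := by
    intro j
    have hj : (0 : ℝ) ≤ j := Nat.cast_nonneg j
    have hp : 0 < (j : ℝ) + K0 := by linarith
    have : c / ((j : ℝ) + K0) ≤ 1 := by
      rw [div_le_one hp]; linarith
    linarith
  have main : ∀ m n : ℕ, m ≤ n →
      (∏ j ∈ Finset.Icc m n, (1 - μ * (a / (j + K0))))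
        ≤ (((m : ℝ) + K0) / ((n : ℝ) + K0 + 1)) ^ c := by
    intro m n hmn
    have hrw : ∀ j : ℕ, 1 - μ * (a / ((j : ℝ) + K0)) = 1 - c / ((j : ℝ) + K0) := by
      intro j; rw [hc]; ring
    induction n, hmn using Nat.le_induction with
    | base =>
        rw [Finset.Icc_self, Finset.prod_singleton, hrw m]
        have hcm : c ≤ (m : ℝ) + K0 := by
          have : (0 : ℝ) ≤ m := Nat.cast_nonneg m
          linarith
        exact key _ hcm
    | succ n hmn ih =>
        rw [Finset.prod_Icc_succ_top (Nat.le_succ_of_le hmn)]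
        have hn : (0 : ℝ) ≤ n := Nat.cast_nonneg n
        have hcn : c ≤ ((n + 1 : ℕ) : ℝ) + K0 := by push_cast; linarith
        have hkey := key _ hcn
        have hple : (∏ j ∈ Finset.Icc m n, (1 - μ * (a / (j + K0))))
            * (1 - μ * (a / (((n + 1 : ℕ) : ℝ) + K0)))
            ≤ (((m : ℝ) + K0) / ((n : ℝ) + K0 + 1)) ^ c
            * ((((n + 1 : ℕ) : ℝ) + K0) / ((((n + 1 : ℕ) : ℝ) + K0) + 1)) ^ c := by
          refine mul_le_mul ih ?_ ?_ (Real.rpow_nonneg ?_ c)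
          · rw [hrw]; exact hkey
          · rw [hrw]; exact hterm_nonneg _
          · have hm : (0 : ℝ) ≤ m := Nat.cast_nonneg m
            positivity
        refine hple.trans (le_of_eq ?_)
        rw [← Real.mul_rpow (by positivity) (by positivity)]
        congr 1
        push_cast
        have hm : (0 : ℝ) ≤ m := Nat.cast_nonneg m
        field_simp
        ring
  intro m n hmn
  refine ⟨main m n hmn, fun hm => ?_⟩
  refine (main m n hmn).trans ?_
  have hm1 : (1 : ℝ) ≤ m := by exact_mod_cast hm
  set s : ℝ := (m : ℝ) + K0 - 1 with hs
  have hsK : K0 ≤ s := by simp only [hs]; linarith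
  have hs0 : 0 < s := lt_of_lt_of_le hK0pos hsK
  have hn : (0 : ℝ) ≤ n := Nat.cast_nonneg n
  have hd : 0 < (n : ℝ) + K0 + 1 := by linarith
  have hsplit : ((m : ℝ) + K0) / ((n : ℝ) + K0 + 1)
      = ((s + 1) / s) * (s / ((n : ℝ) + K0 + 1)) := by
    field_simp [hs]
    linarith
  rw [hsplit, Real.mul_rpow (by positivity) (by positivity)]
  have hfac : ((s + 1) / s) ^ c ≤ Real.exp 1 := by
    rw [Real.rpow_def_of_pos (by positivity)]
    rw [Real.exp_le_exp]
    have hlog : Real.log ((s + 1) / s) ≤ 1 / s := by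
      have := Real.log_le_sub_one_of_pos (show 0 < (s + 1) / s by positivity)
      have he : (s + 1) / s - 1 = 1 / s := by field_simp; ring
      linarith
    have h1 : c * Real.log ((s + 1) / s) ≤ c * (1 / s) :=
      mul_le_mul_of_nonneg_left hlog hc0.le
    have hcs : c ≤ s := hK0.trans hsK
    have h2 : c * (1 / s) ≤ 1 := by
      rw [mul_one_div, div_le_one hs0]; exact hcs
    linarith
  have hgoal : (((m : ℝ) + K0 - 1) / ((n : ℝ) + K0 + 1)) ^ c
      = (s / ((n : ℝ) + K0 + 1)) ^ c := by rw [hs]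
  rw [hgoal]
  exact mul_le_mul_of_nonneg_right hfac (Real.rpow_nonneg (by positivity) c)
end
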